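/- For every positive integer m, Σ_{l=1}^{m} tan²(πl/(2m+1)) = m(2m+1). -/

import Mathlib

open Real Finset

private lemma tanA (θ : ℝ) (hz : Complex.exp (2*θ*Complex.I) + 1 ≠ 0) :
    ((Real.tan θ : ℂ))^2
      = -(Complex.exp (2*θ*Complex.I) - 1)^2 / (Complex.exp (2*θ*Complex.I) + 1)^2 := by
  set w : ℂ := Complex.exp (θ*Complex.I) with hw
  have hw0 : w ≠ 0 := Complex.exp_ne_zero _
  have hz2 : Complex.exp (2*θ*Complex.I) = w^2 := by
    rw [hw, ← Complex.exp_nat_mul]; ring_nf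
  rw [hz2] at hz ⊢
  have hsin : Complex.sin θ = (w⁻¹ - w) * Complex.I / 2 := by
    rw [Complex.sin, hw, ← Complex.exp_neg]; ring_nf
  have hcos : Complex.cos θ = (w + w⁻¹) / 2 := by
    rw [Complex.cos, hw, ← Complex.exp_neg]; ring_nf
  have hc2 : (w + w⁻¹) / 2 ≠ 0 := by
    intro h
    apply hz
    field_simp at h
    rw [pow_two]; linear_combination h
  rw [Complex.ofReal_tan, Complex.tan_eq_sin_div_cos, hsin, hcos, div_pow,
    div_eq_div_iff (pow_ne_zero 2 hc2) (pow_ne_zero 2 hz)]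
  field_simp
  linear_combination (w^4 - 2*w^2 + 1) * Complex.I_sq

private lemma algB (n : ℕ) (hn : Odd n) (z : ℂ) (hzn : z^n = 1) (hz : z + 1 ≠ 0) :
    -(z-1)^2/(z+1)^2
      = -1 + 2*(∑ k ∈ range n, (-z)^k) - (∑ k ∈ range n, (-z)^k)^2 := by
  have h2 : (∑ k ∈ range n, (-z)^k) * (z+1) = 2 := by
    have h := geom_sum_mul (-z) n
    rw [hn.neg_pow, hzn] at h
    linear_combination -h
  have hP : (∑ k ∈ range n, (-z)^k) = 2/(z+1) := by
    rw [eq_div_iff hz]; exact h2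
  rw [hP]
  field_simp
  ring

private lemma rootG {ζ : ℂ} {m : ℕ} (hζ : IsPrimitiveRoot ζ (2*m+1)) (r : ℕ) :
    ∑ l ∈ Icc 1 (2*m), (ζ^r)^l = if (2*m+1) ∣ r then ((2*m : ℕ) : ℂ) else -1 := by
  have hfull : ∑ l ∈ range (2*m+1), (ζ^r)^l
      = if (2*m+1) ∣ r then (((2*m+1 : ℕ)) : ℂ) else 0 := by
    split_ifs with h
    · rw [(hζ.pow_eq_one_iff_dvd r).2 h]; simp
    · have hne : ζ^r ≠ 1 := fun he => h ((hζ.pow_eq_one_iff_dvd r).1 he)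
      rw [geom_sum_eq hne, ← pow_mul, mul_comm r, pow_mul, hζ.pow_eq_one]
      simp
  have hsplit : ∑ l ∈ range (2*m+1), (ζ^r)^l
      = (ζ^r)^0 + ∑ l ∈ Icc 1 (2*m), (ζ^r)^l := by
    rw [range_eq_Ico, Finset.sum_eq_sum_Ico_succ_bot (Nat.succ_pos _)]
    norm_num [Finset.Ico_add_one_right_eq_Icc]
  rw [hfull, pow_zero] at hsplit
  split_ifs at hsplit ⊢ with h
  · push_cast at hsplit ⊢; linear_combination -hsplit
  · linear_combination -hsplit

private lemma negpow (ζ : ℂ) (l k : ℕ) : (-(ζ^l))^k = (-1:ℂ)^k * (ζ^k)^l := by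
  rw [neg_pow, ← pow_mul, mul_comm l k, pow_mul]

private lemma oddgeom (m : ℕ) : ∑ k ∈ range (2*m+1), (-1:ℂ)^k = 1 := by
  rw [neg_one_geom_sum, if_neg]
  simp [Nat.even_add_one, parity_simps]

private lemma sumP {ζ : ℂ} {m : ℕ} (hζ : IsPrimitiveRoot ζ (2*m+1)) :
    ∑ l ∈ Icc 1 (2*m), (∑ k ∈ range (2*m+1), (-(ζ^l))^k) = 2*(m:ℂ) := by
  simp only [negpow]
  rw [Finset.sum_comm]
  have h1 : ∀ k ∈ range (2*m+1), ∑ l ∈ Icc 1 (2*m), (-1:ℂ)^k * (ζ^k)^l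
      = (-1:ℂ)^k * (-1) + (if k = 0 then ((2*m:ℕ):ℂ) + 1 else 0) := by
    intro k hk
    rw [← Finset.mul_sum, rootG hζ k]
    rcases eq_or_ne k 0 with rfl | hk0
    · simp
    · rw [if_neg hk0, if_neg (fun hd => hk0 (Nat.eq_zero_of_dvd_of_lt hd (mem_range.1 hk)))]
      ring
  rw [Finset.sum_congr rfl h1, Finset.sum_add_distrib, Finset.sum_ite_eq' (range (2*m+1)) 0,
    if_pos (mem_range.2 (by omega))]
  have : ∑ k ∈ range (2*m+1), (-1:ℂ)^k * (-1) = -1 := by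
    rw [← Finset.sum_mul, oddgeom]; ring
  rw [this]
  push_cast; ring

private lemma sumPP {ζ : ℂ} {m : ℕ} (hζ : IsPrimitiveRoot ζ (2*m+1)) :
    ∑ l ∈ Icc 1 (2*m), (∑ k ∈ range (2*m+1), (-(ζ^l))^k)^2 = -(4*(m:ℂ)^2) := by
  have expand : ∀ l, (∑ k ∈ range (2*m+1), (-(ζ^l))^k)^2
      = ∑ j ∈ range (2*m+1), ∑ k ∈ range (2*m+1), (-1:ℂ)^(j+k) * (ζ^(j+k))^l := by
    intro l
    rw [sq, Finset.sum_mul_sum]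
    refine Finset.sum_congr rfl fun j _ => Finset.sum_congr rfl fun k _ => ?_
    rw [← pow_add, negpow]
  simp only [expand]
  rw [Finset.sum_comm]
  have swap2 : ∀ j ∈ range (2*m+1),
      ∑ l ∈ Icc 1 (2*m), ∑ k ∈ range (2*m+1), (-1:ℂ)^(j+k) * (ζ^(j+k))^l
      = ∑ k ∈ range (2*m+1), ∑ l ∈ Icc 1 (2*m), (-1:ℂ)^(j+k) * (ζ^(j+k))^l :=
    fun j _ => Finset.sum_comm
  rw [Finset.sum_congr rfl swap2]
  have hinner : ∀ j ∈ range (2*m+1), ∀ k ∈ range (2*m+1),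
      ∑ l ∈ Icc 1 (2*m), (-1:ℂ)^(j+k) * (ζ^(j+k))^l
        = (-1:ℂ)^(j+k) * (-1)
          + (if (2*m+1) ∣ (j+k) then (-1:ℂ)^(j+k) * (((2*m+1:ℕ)):ℂ) else 0) := by
    intro j _ k _
    rw [← Finset.mul_sum, rootG hζ (j+k)]
    split_ifs with h
    · push_cast; ring
    · ring
  have hjsum : ∀ j ∈ range (2*m+1),
      ∑ k ∈ range (2*m+1),
        ((-1:ℂ)^(j+k) * (-1)
          + (if (2*m+1) ∣ (j+k) then (-1:ℂ)^(j+k) * (((2*m+1:ℕ)):ℂ) else 0))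
      = -(-1:ℂ)^j + (if j = 0 then (((2*m+1:ℕ)):ℂ) else -(((2*m+1:ℕ)):ℂ)) := by
    intro j hj
    have hj' := mem_range.1 hj
    rw [Finset.sum_add_distrib]
    congr 1
    · have hre : ∀ k, (-1:ℂ)^(j+k) * (-1) = (-1:ℂ)^j * ((-1:ℂ)^k * (-1)) := by
        intro k; rw [pow_add]; ring
      simp only [hre]
      rw [← Finset.mul_sum, ← Finset.sum_mul, oddgeom]
      ring
    · rcases eq_or_ne j 0 with rfl | hj0
      · rw [if_pos rfl, Finset.sum_eq_single 0]
        · norm_num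
        · intro k hk hk0
          refine if_neg fun hd => hk0 ?_
          simpa using Nat.eq_zero_of_dvd_of_lt (by simpa using hd) (mem_range.1 hk)
        · intro h; exact absurd (mem_range.2 (by omega)) h
      · rw [if_neg hj0, Finset.sum_eq_single (2*m+1-j)]
        · have hjk : j + (2*m+1-j) = 2*m+1 := by omega
          rw [if_pos (by rw [hjk]), hjk, Odd.neg_one_pow ⟨m, by ring⟩]
          ring
        · intro k hk hkne
          refine if_neg fun hd => ?_
          obtain ⟨c, hc⟩ := hd
          have hk' := mem_range.1 hk
          have hcb : c ≤ 1 := by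
            by_contra hcb
            push_neg at hcb
            have h2 : (2*m+1) * 2 ≤ (2*m+1) * c := Nat.mul_le_mul_left _ hcb
            omega
          interval_cases c <;> omega
        · intro h; exact absurd (mem_range.2 (by omega)) h
  rw [Finset.sum_congr rfl (fun j hj => by
    rw [Finset.sum_congr rfl (hinner j hj), hjsum j hj])]
  rw [Finset.sum_add_distrib]
  have p1 : ∑ j ∈ range (2*m+1), -(-1:ℂ)^j = -1 := by
    rw [Finset.sum_neg_distrib, oddgeom]
  have p2 : ∑ j ∈ range (2*m+1), (if j = 0 then (((2*m+1:ℕ)):ℂ) else -(((2*m+1:ℕ)):ℂ))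
      = -(((2*m+1:ℕ)):ℂ) * (2*m+1) + 2*(((2*m+1:ℕ)):ℂ) := by
    have hre : ∀ j, (if j = 0 then (((2*m+1:ℕ)):ℂ) else -(((2*m+1:ℕ)):ℂ))
        = -(((2*m+1:ℕ)):ℂ) + (if j = 0 then 2*(((2*m+1:ℕ)):ℂ) else 0) := by
      intro j
      rcases eq_or_ne j 0 with rfl | hj0
      · simp; ring
      · simp [hj0]
    simp only [hre]
    rw [Finset.sum_add_distrib, Finset.sum_ite_eq' (range (2*m+1)) 0,
      if_pos (mem_range.2 (by omega)), Finset.sum_const, card_range, nsmul_eq_mul]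
    push_cast
    ring
  rw [p1, p2]
  push_cast
  ring

theorem tan_sq_sum (m : ℕ) (hm : 0 < m) :
    ∑ l ∈ Finset.Icc 1 m, (Real.tan (Real.pi * l / (2 * m + 1))) ^ 2 = m * (2 * m + 1) := by
  have hn0 : (2*m+1) ≠ 0 := by omega
  have hodd : Odd (2*m+1) := ⟨m, by ring⟩
  have hneR : (2*(m:ℝ)+1) ≠ 0 := by positivity
  set ζ : ℂ := Complex.exp (2*(π:ℂ)*Complex.I/((2*m+1 : ℕ):ℂ)) with hζdef
  have hζ : IsPrimitiveRoot ζ (2*m+1) := Complex.isPrimitiveRoot_exp _ hn0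
  have hexp : ∀ l : ℕ,
      Complex.exp (2*((π * l / (2 * m + 1) : ℝ) : ℂ)*Complex.I) = ζ^l := by
    intro l
    rw [hζdef, ← Complex.exp_nat_mul]
    congr 1
    have hneC : ((2*m+1 : ℕ) : ℂ) ≠ 0 := Nat.cast_ne_zero.2 hn0
    push_cast
    push_cast at hneC
    field_simp
  have hz1 : ∀ l ∈ Icc 1 (2*m), ζ^l + 1 ≠ 0 := by
    intro l hl h
    have hl' := mem_Icc.1 hl
    have h1 : (ζ^l)^2 = 1 := by
      have : ζ^l = -1 := by linear_combination h
      rw [this]; ring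
    rw [← pow_mul] at h1
    have hdvd : (2*m+1) ∣ l*2 := (hζ.pow_eq_one_iff_dvd _).1 h1
    have hco : Nat.Coprime (2*m+1) 2 := hodd.coprime_two_right
    have : (2*m+1) ∣ l := hco.dvd_of_dvd_mul_right hdvd
    have := Nat.le_of_dvd (by omega) this
    omega
  have key : ∀ l ∈ Icc 1 (2*m),
      (((Real.tan (π * l / (2 * m + 1))) ^ 2 : ℝ) : ℂ)
        = -1 + 2*(∑ k ∈ range (2*m+1), (-(ζ^l))^k)
          - (∑ k ∈ range (2*m+1), (-(ζ^l))^k)^2 := by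
    intro l hl
    have h1 := hz1 l hl
    have hzn : (ζ^l)^(2*m+1) = 1 := by
      rw [← pow_mul, mul_comm, pow_mul, hζ.pow_eq_one, one_pow]
    have e := tanA (π * l / (2 * m + 1)) (by rw [hexp l]; exact h1)
    rw [Complex.ofReal_pow, e, hexp l]
    exact algB (2*m+1) hodd (ζ^l) hzn h1
  have hC : ∑ l ∈ Icc 1 (2*m), (((Real.tan (π * l / (2 * m + 1))) ^ 2 : ℝ) : ℂ)
      = 2*(m:ℂ) + 4*(m:ℂ)^2 := by
    rw [Finset.sum_congr rfl key, Finset.sum_sub_distrib, Finset.sum_add_distrib,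
      ← Finset.mul_sum, sumP hζ, sumPP hζ, Finset.sum_const, Nat.card_Icc, nsmul_eq_mul]
    push_cast
    ring
  have hR : ∑ l ∈ Icc 1 (2*m), (Real.tan (π * l / (2 * m + 1))) ^ 2
      = 2*(m:ℝ) + 4*(m:ℝ)^2 := by exact_mod_cast hC
  -- pairing
  have hIoc : ∀ k : ℕ, Ioc 0 k = Icc 1 k := by
    intro k; ext x; simp [mem_Ioc, mem_Icc]; omega
  have hpair : ∑ l ∈ Ioc m (2*m), (Real.tan (π * l / (2 * m + 1))) ^ 2
      = ∑ l ∈ Ioc 0 m, (Real.tan (π * l / (2 * m + 1))) ^ 2 := by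
    refine Finset.sum_nbij' (fun a => 2*m+1-a) (fun a => 2*m+1-a) ?_ ?_ ?_ ?_ ?_
    · intro a ha; have := mem_Ioc.1 ha; simp only [mem_Ioc]; omega
    · intro a ha; have := mem_Ioc.1 ha; simp only [mem_Ioc]; omega
    · intro a ha; have := mem_Ioc.1 ha; omega
    · intro a ha; have := mem_Ioc.1 ha; omega
    · intro a ha
      have ha' := mem_Ioc.1 ha
      have hc : ((2*m+1-a : ℕ) : ℝ) = 2*(m:ℝ)+1-(a:ℝ) := by
        push_cast [Nat.cast_sub (by omega : a ≤ 2*m+1)]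
        ring
      rw [hc]
      have harg : π * (2*(m:ℝ)+1-(a:ℝ)) / (2*(m:ℝ)+1) = π - π * a / (2*(m:ℝ)+1) := by
        field_simp
      rw [harg, Real.tan_pi_sub, neg_sq]
  have hsplit : ∑ l ∈ Ioc 0 m, (Real.tan (π * l / (2 * m + 1))) ^ 2
      + ∑ l ∈ Ioc m (2*m), (Real.tan (π * l / (2 * m + 1))) ^ 2
      = ∑ l ∈ Ioc 0 (2*m), (Real.tan (π * l / (2 * m + 1))) ^ 2 :=
    Finset.sum_Ioc_consecutive _ (by omega) (by omega)
  rw [hpair] at hsplit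
  rw [hIoc] at hsplit
  rw [hIoc] at hsplit
  rw [hR] at hsplit
  linear_combination hsplit / 2
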